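/- In a rooted tree ordered so that the children of each node are sorted by decreasing rank, where rank(c) = ⌊log₂ s(c)⌋, if a node u has a heavy child c (i.e., s(c) > s(u)/2), then c is among the first 2 children of u in this order. -/

import Mathlib

lemma rank_le_imp {s : ℕ} {t : ℕ} (hs : 1 ≤ s) (h : Nat.log 2 t ≤ Nat.log 2 s) :
    t < 2 * s := by
  rcases Nat.eq_zero_or_pos t with ht | ht
  · omega
  have h1 : t < 2 ^ (Nat.log 2 t + 1) := Nat.lt_pow_succ_log_self (by norm_num) t
  have h2 : 2 ^ (Nat.log 2 s) ≤ s := Nat.pow_log_le_self 2 (by omega)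
  have h3 : (2:ℕ) ^ (Nat.log 2 t + 1) ≤ 2 ^ (Nat.log 2 s + 1) :=
    Nat.pow_le_pow_right (by norm_num) (by omega)
  calc t < 2 ^ (Nat.log 2 t + 1) := h1
    _ ≤ 2 ^ (Nat.log 2 s + 1) := h3
    _ = 2 * 2 ^ (Nat.log 2 s) := by ring
    _ ≤ 2 * s := by omega

/-- Let the children of a node `u` be listed in order of decreasing rank, where
`rank c = ⌊log₂ (s c)⌋`, all subtree sizes are positive, and
`s u ≥ Σ_{c child of u} s c`.  If `c` is a heavy child (`s c > s u / 2`),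
then `c` is among the first 2 children in this order. -/
theorem stmt9 {ι : Type*} (s : ι → ℕ) (su : ℕ) (L : List ι)
    (hnd : L.Nodup)
    (hpos : ∀ c ∈ L, 1 ≤ s c)
    (hsum : (L.map s).sum ≤ su)
    (hsort : L.Pairwise (fun a b => Nat.log 2 (s b) ≤ Nat.log 2 (s a)))
    (c : ι) (hc : c ∈ L) (hheavy : su < 2 * s c) :
    c ∈ L.take 2 := by
  by_contra hcon
  obtain ⟨a, rest⟩ : ∃ a rest, L = a :: rest := by
    cases L with
    | nil => simp at hc
    | cons a rest => exact ⟨a, rest, rfl⟩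
  obtain ⟨rest, rfl⟩ := rest
  obtain ⟨b, rest2, rfl⟩ : ∃ b rest2, rest = b :: rest2 := by
    cases rest with
    | nil => exact absurd (by simpa using hc) hcon
    | cons b rest2 => exact ⟨b, rest2, rfl⟩
  simp only [List.take, List.mem_cons, List.not_mem_nil, or_false, not_or] at hcon
  have hc2 : c ∈ rest2 := by
    rcases (by simpa using hc : c = a ∨ c = b ∨ c ∈ rest2) with rfl | rfl | h
    · exact absurd rfl hcon.1
    · exact absurd rfl hcon.2
    · exact h
  have hsa : s a ≥ 1 := hpos a (by simp)
  have hsb : s b ≥ 1 := hpos b (by simp)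
  have hra : Nat.log 2 (s c) ≤ Nat.log 2 (s a) :=
    (List.pairwise_cons.mp hsort).1 c (by simp [hc2])
  have hrb : Nat.log 2 (s c) ≤ Nat.log 2 (s b) :=
    (List.pairwise_cons.mp (List.pairwise_cons.mp hsort).2).1 c (by simpa using hc2)
  have h1 : s c < 2 * s a := rank_le_imp hsa hra
  have h2 : s c < 2 * s b := rank_le_imp hsb hrb
  have h3 : s c ≤ (rest2.map s).sum :=
    List.single_le_sum (fun x _ => Nat.zero_le x) _ (List.mem_map_of_mem (f := s) hc2)
  have h4 : s a + s b + (rest2.map s).sum ≤ su := by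
    simpa [add_assoc] using hsum
  omega
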